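/- Let M be a countable non-standard model of PA and suppose the addition function ⊕ of M (on domain ℕ) is computable. Then for every element c ∈ M and every n ∈ ℕ, the relation 'p̄_n^M divides c in M' is decidable uniformly in n, where p_n is the n-th prime. -/

import Mathlib

open FirstOrder Language

inductive ArithFunc : ℕ → Type
  | zero : ArithFunc 0
  | one : ArithFunc 0
  | plus : ArithFunc 2
  | times : ArithFunc 2

inductive ArithRel : ℕ → Type
  | le : ArithRel 2

/-- The language of arithmetic {0, 1, +, ×, ≤}. -/
def LA : Language := ⟨ArithFunc, ArithRel⟩

def zeroT {α} : LA.Term α := Term.func ArithFunc.zero ![]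
def oneT {α} : LA.Term α := Term.func ArithFunc.one ![]
def plusT {α} (t s : LA.Term α) : LA.Term α := Term.func ArithFunc.plus ![t, s]
def timesT {α} (t s : LA.Term α) : LA.Term α := Term.func ArithFunc.times ![t, s]

/-- Numerals: 0̄ = 0, (n+1)̄ = n̄ + 1 (so n̄ = 1 + ⋯ + 1, n times). -/
def numeral {α} : ℕ → LA.Term α
  | 0 => zeroT
  | 1 => oneT
  | (n + 2) => plusT (numeral (n+1)) oneT

/-- Substitute a term for the single bound variable of a bounded formula, in context. -/
def sub1 {α} (φ : LA.BoundedFormula α 1) (t : LA.Term (α ⊕ Fin 1)) : LA.BoundedFormula α 1 :=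
  BoundedFormula.relabel id
    (φ.toFormula.subst (Sum.elim (fun a => Term.var (Sum.inl a)) fun _ => t))

/-- φ(0) -/
def atZero {α} (φ : LA.BoundedFormula α 1) : LA.Formula α :=
  φ.toFormula.subst (Sum.elim Term.var fun _ => zeroT)

/-- `Formula.iAlls` with its December 2024 signature and body (Mathlib now takes a formula over
`α ⊕ β` instead of a relabelling map). -/
noncomputable def iAllsOld {L : Language} {α β γ : Type*} [Finite γ] (f : α → β ⊕ γ)
    (φ : L.Formula α) : L.Formula β :=
  let e := Classical.choice (Classical.choose_spec (Finite.exists_equiv_fin γ))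
  (BoundedFormula.relabel (fun a => Sum.map id e (f a)) φ).alls

/-- The universal closure of the induction axiom for φ (with parameter variables Fin k). -/
noncomputable def indSent {k : ℕ} (φ : LA.BoundedFormula (Fin k) 1) : LA.Sentence :=
  iAllsOld (Sum.inr : Fin k → Empty ⊕ Fin k)
    (((atZero φ) ⊓ ((φ ⟹ sub1 φ (plusT (Term.var (Sum.inr 0)) oneT)).all)) ⟹ φ.all)

def ax1 : LA.Sentence := (∼(Term.bdEqual (plusT (Term.var (Sum.inr 0)) oneT) zeroT)).all
def ax2 : LA.Sentence :=
  ((Term.bdEqual (plusT (Term.var (Sum.inr 0)) oneT) (plusT (Term.var (Sum.inr 1)) oneT) ⟹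
    Term.bdEqual (Term.var (Sum.inr 0)) (Term.var (Sum.inr 1))).all).all
def ax3 : LA.Sentence := (Term.bdEqual (plusT (Term.var (Sum.inr 0)) zeroT) (Term.var (Sum.inr 0))).all
def ax4 : LA.Sentence :=
  ((Term.bdEqual (plusT (Term.var (Sum.inr 0)) (plusT (Term.var (Sum.inr 1)) oneT))
    (plusT (plusT (Term.var (Sum.inr 0)) (Term.var (Sum.inr 1))) oneT)).all).all
def ax5 : LA.Sentence := (Term.bdEqual (timesT (Term.var (Sum.inr 0)) zeroT) zeroT).all
def ax6 : LA.Sentence :=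
  ((Term.bdEqual (timesT (Term.var (Sum.inr 0)) (plusT (Term.var (Sum.inr 1)) oneT))
    (plusT (timesT (Term.var (Sum.inr 0)) (Term.var (Sum.inr 1))) (Term.var (Sum.inr 0)))).all).all
/-- x ≤ y ↔ ∃ z, x + z = y -/
def axLe : LA.Sentence :=
  (((BoundedFormula.rel (n := 2) ArithRel.le ![Term.var (Sum.inr 0), Term.var (Sum.inr 1)]).iff
    ((Term.bdEqual (plusT (Term.var (Sum.inr 0)) (Term.var (Sum.inr 2)))
      (Term.var (Sum.inr 1))).ex)).all).all

/-- First-order Peano arithmetic, with full induction schema (with parameters). -/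
noncomputable def PA : LA.Theory :=
  {ax1, ax2, ax3, ax4, ax5, ax6, axLe} ∪ ⋃ k : ℕ, Set.range (indSent (k := k))

/-- The interpretation in `M` of the numeral `n̄`. -/
def std (M : Type*) [LA.Structure M] (n : ℕ) : M :=
  (numeral n).realize Empty.elim

def addM {M : Type*} [LA.Structure M] (a b : M) : M := Structure.funMap (L := LA) ArithFunc.plus ![a, b]
def mulM {M : Type*} [LA.Structure M] (a b : M) : M := Structure.funMap (L := LA) ArithFunc.times ![a, b]
def zeroM (M : Type*) [LA.Structure M] : M := Structure.funMap (L := LA) ArithFunc.zero ![]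
def oneM (M : Type*) [LA.Structure M] : M := Structure.funMap (L := LA) ArithFunc.one ![]
def leM {M : Type*} [LA.Structure M] (a b : M) : Prop := Structure.RelMap (L := LA) ArithRel.le ![a, b]

/-- The standard model ℕ. -/
def stdNat : LA.Structure ℕ where
  funMap {_} f v :=
    match f with
    | .zero => 0
    | .one => 1
    | .plus => v 0 + v 1
    | .times => v 0 * v 1
  RelMap {_} r v :=
    match r with
    | .le => v 0 ≤ v 1

attribute [instance] stdNat
/-- The `L_A`-structure on ℕ with operations ⊕ = f, ⊗ = g, relation r and constants n0, n1. -/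
def mkStructure (f g : ℕ → ℕ → ℕ) (r : ℕ → ℕ → Prop) (n0 n1 : ℕ) : LA.Structure ℕ where
  funMap {_} F v :=
    match F with
    | .zero => n0
    | .one => n1
    | .plus => f (v 0) (v 1)
    | .times => g (v 0) (v 1)
  RelMap {_} R v :=
    match R with
    | .le => r (v 0) (v 1)
section Work
variable {M : Type} [LA.Structure M]

@[simp] lemma realize_zeroT {α} (v : α → M) : (zeroT).realize v = zeroM M := by
  show Structure.funMap (L := LA) _ _ = _; congr; funext i; exact i.elim0

@[simp] lemma realize_oneT {α} (v : α → M) : (oneT).realize v = oneM M := by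
  show Structure.funMap (L := LA) _ _ = _; congr; funext i; exact i.elim0

@[simp] lemma realize_plusT {α} (v : α → M) (t s : LA.Term α) :
    (plusT t s).realize v = addM (t.realize v) (s.realize v) := by
  show Structure.funMap (L := LA) _ _ = _; congr; funext i; fin_cases i <;> rfl

@[simp] lemma realize_timesT {α} (v : α → M) (t s : LA.Term α) :
    (timesT t s).realize v = mulM (t.realize v) (s.realize v) := by
  show Structure.funMap (L := LA) _ _ = _; congr; funext i; fin_cases i <;> rfl

variable [hPA : PA.Model M]

lemma A3 : ∀ x : M, addM x (zeroM M) = x := by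
  have h : @Sentence.Realize LA M _ ax3 := Theory.realize_sentence_of_mem PA (by simp [PA])
  intro x
  have h2 := h x
  simpa [ax3, Sentence.Realize, Formula.Realize, Fin.snoc] using h2

end Work
set_option linter.unusedSectionVars false
section Work2
variable {M : Type} [LA.Structure M]

lemma realize_atZero {k} (φ : LA.BoundedFormula (Fin k) 1) (v : Fin k → M) :
    (atZero φ).Realize v ↔ φ.Realize v ![zeroM M] := by
  simp only [atZero, Formula.Realize, BoundedFormula.realize_subst]
  rw [show ∀ w : (Fin k ⊕ Fin 1) → M, BoundedFormula.Realize φ.toFormula w default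
      = φ.toFormula.Realize w from fun _ => rfl, BoundedFormula.realize_toFormula]
  have e1 : ((fun a : Fin k ⊕ Fin 1 => Term.realize v (Sum.elim Term.var (fun _ : Fin 1 => (zeroT : LA.Term (Fin k))) a)) ∘ Sum.inl) = v := rfl
  have e2 : ((fun a : Fin k ⊕ Fin 1 => Term.realize v (Sum.elim Term.var (fun _ : Fin 1 => (zeroT : LA.Term (Fin k))) a)) ∘ Sum.inr)
      = ![zeroM M] := by funext i; fin_cases i; simp
  rw [e1, e2]

lemma realize_sub1 {k} (φ : LA.BoundedFormula (Fin k) 1) (t : LA.Term (Fin k ⊕ Fin 1))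
    (v : Fin k → M) (a : M) :
    (sub1 φ t).Realize v ![a] ↔ φ.Realize v ![t.realize (Sum.elim v ![a])] := by
  simp only [sub1, BoundedFormula.realize_relabel, BoundedFormula.realize_subst]
  rw [show ∀ (w : (Fin k ⊕ Fin 1) → M) (xs : Fin 0 → M), BoundedFormula.Realize φ.toFormula w xs
      = φ.toFormula.Realize w from fun w xs => by rw [Subsingleton.elim xs default]; rfl,
    BoundedFormula.realize_toFormula]
  have hv : (Sum.elim v (![a] ∘ Fin.castAdd 0) ∘ id) = Sum.elim v ![a] := by
    funext i; cases i <;> simp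
  rw [hv]
  have e1 : ((fun b : Fin k ⊕ Fin 1 => Term.realize (Sum.elim v ![a])
      (Sum.elim (fun a : Fin k => (Term.var (Sum.inl a) : LA.Term (Fin k ⊕ Fin 1))) (fun _ : Fin 1 => t) b)) ∘ Sum.inl) = v := rfl
  have e2 : ((fun b : Fin k ⊕ Fin 1 => Term.realize (Sum.elim v ![a])
      (Sum.elim (fun a : Fin k => (Term.var (Sum.inl a) : LA.Term (Fin k ⊕ Fin 1))) (fun _ : Fin 1 => t) b)) ∘ Sum.inr)
      = ![t.realize (Sum.elim v ![a])] := by funext i; fin_cases i; simp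
  rw [e1, e2]

variable [hPA : PA.Model M]

lemma realize_iAllsOld {γ : Type} [Finite γ] {α β : Type} (f : α → β ⊕ γ) (φ : LA.Formula α)
    (v : β → M) (v' : Fin 0 → M) :
    BoundedFormula.Realize (iAllsOld f φ) v v' ↔ ∀ i : γ → M, φ.Realize fun a => Sum.elim v i (f a) := by
  let e := Classical.choice (Classical.choose_spec (Finite.exists_equiv_fin γ))
  rw [iAllsOld, Subsingleton.elim v' default]
  change Formula.Realize _ v ↔ _
  simp only [Nat.add_zero, BoundedFormula.realize_alls, BoundedFormula.realize_relabel,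
    Function.comp_def]
  refine Equiv.forall_congr ?_ ?_
  · exact ⟨fun v => v ∘ e, fun v => v ∘ e.symm,
      fun _ => by simp [Function.comp_def],
      fun _ => by simp [Function.comp_def]⟩
  · intro x
    rw [Formula.Realize, iff_iff_eq]
    congr
    · funext i
      rcases f i with a | a <;> simp [e]
    · funext i
      exact i.elim0

lemma indM {k} (φ : LA.BoundedFormula (Fin k) 1) (v : Fin k → M)
    (h0 : φ.Realize v ![zeroM M])
    (hs : ∀ x : M, φ.Realize v ![x] → φ.Realize v ![addM x (oneM M)]) :
    ∀ x : M, φ.Realize v ![x] := by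
  have h : @Sentence.Realize LA M _ (indSent φ) :=
    Theory.realize_sentence_of_mem PA (by right; exact Set.mem_iUnion.2 ⟨k, ⟨φ, rfl⟩⟩)
  simp only [indSent, Sentence.Realize, realize_iAllsOld, Formula.Realize, BoundedFormula.realize_iAlls,
    BoundedFormula.realize_imp, BoundedFormula.realize_inf, BoundedFormula.realize_all,
    Formula.realize_iAlls] at h
  have h2 := h v
  have esnoc : ∀ a : M, (Fin.snoc (default : Fin 0 → M) a) = ![a] := by
    intro a; funext i; fin_cases i; simp [Fin.snoc]
  have ev : (fun a => Sum.elim (default : Empty → M) v (Sum.inr a)) = v := rfl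
  rw [ev] at h2
  simp only [esnoc] at h2
  intro x
  apply h2 _ x
  constructor
  · exact (realize_atZero φ v).2 h0
  · intro a ha
    refine (realize_sub1 φ _ v a).2 ?_
    have := hs a ha
    simpa using this
end Work2
section Work3
variable {M : Type} [LA.Structure M] [hPA : PA.Model M]

lemma A1 : ∀ x : M, addM x (oneM M) ≠ zeroM M := by
  have h : @Sentence.Realize LA M _ ax1 := Theory.realize_sentence_of_mem PA (by simp [PA])
  intro x hx
  have h2 := h x
  simp only [ax1, Sentence.Realize, Formula.Realize, BoundedFormula.realize_all,
    BoundedFormula.realize_not, BoundedFormula.realize_bdEqual, Term.realize, realize_plusT,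
    realize_zeroT, realize_oneT] at h2
  have h2 := h x
  revert hx
  simpa [ax1, Sentence.Realize, Formula.Realize, Fin.snoc] using h2

lemma A2 : ∀ x y : M, addM x (oneM M) = addM y (oneM M) → x = y := by
  have h : @Sentence.Realize LA M _ ax2 := Theory.realize_sentence_of_mem PA (by simp [PA])
  intro x y
  have h2 := h x y
  simpa [ax2, Sentence.Realize, Formula.Realize, Fin.snoc] using h2

lemma A4 : ∀ x y : M, addM x (addM y (oneM M)) = addM (addM x y) (oneM M) := by
  have h : @Sentence.Realize LA M _ ax4 := Theory.realize_sentence_of_mem PA (by simp [PA])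
  intro x y
  have h2 := h x y
  simpa [ax4, Sentence.Realize, Formula.Realize, Fin.snoc] using h2

lemma A5 : ∀ x : M, mulM x (zeroM M) = zeroM M := by
  have h : @Sentence.Realize LA M _ ax5 := Theory.realize_sentence_of_mem PA (by simp [PA])
  intro x
  have h2 := h x
  simpa [ax5, Sentence.Realize, Formula.Realize, Fin.snoc] using h2

lemma A6 : ∀ x y : M, mulM x (addM y (oneM M)) = addM (mulM x y) x := by
  have h : @Sentence.Realize LA M _ ax6 := Theory.realize_sentence_of_mem PA (by simp [PA])
  intro x y
  have h2 := h x y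
  simpa [ax6, Sentence.Realize, Formula.Realize, Fin.snoc] using h2

@[simp] lemma realize_leF {α} {n} (t s : LA.Term (α ⊕ Fin n)) (v : α → M) (xs : Fin n → M) :
    (BoundedFormula.rel ArithRel.le ![t, s]).Realize v xs ↔
      leM (t.realize (Sum.elim v xs)) (s.realize (Sum.elim v xs)) := by
  change Structure.RelMap (L := LA) ArithRel.le
    (fun i => Term.realize (Sum.elim v xs) (![t, s] i)) ↔ _
  have h1 : (fun i => Term.realize (Sum.elim v xs) (![t, s] i))
      = ![t.realize (Sum.elim v xs), s.realize (Sum.elim v xs)] := by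
    funext i; fin_cases i <;> rfl
  rw [h1]; rfl

lemma ALe : ∀ x y : M, leM x y ↔ ∃ z, addM x z = y := by
  have h : @Sentence.Realize LA M _ axLe := Theory.realize_sentence_of_mem PA (by simp [PA])
  intro x y
  have h2 := h x y
  simpa [axLe, Sentence.Realize, Formula.Realize, Fin.snoc] using h2

end Work3
section Work4
variable {M : Type} [LA.Structure M] [hPA : PA.Model M]

lemma zero_addM : ∀ x : M, addM (zeroM M) x = x := by
  have h := indM (M := M) (k := 0)
    (Term.bdEqual (plusT zeroT (Term.var (Sum.inr 0))) (Term.var (Sum.inr 0))) default ?_ ?_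
  · intro x
    have h2 := h x
    simpa using h2
  · simpa using A3 (zeroM M)
  · intro x hx
    simp at hx ⊢
    rw [A4 (zeroM M) x, hx]
end Work4

section Work5
variable {M : Type} [LA.Structure M] [hPA : PA.Model M]

lemma succ_addM : ∀ a x : M, addM (addM a (oneM M)) x = addM (addM a x) (oneM M) := by
  intro a
  have h := indM (M := M) (k := 1)
    (Term.bdEqual (plusT (plusT (Term.var (Sum.inl 0)) oneT) (Term.var (Sum.inr 0)))
      (plusT (plusT (Term.var (Sum.inl 0)) (Term.var (Sum.inr 0))) oneT)) ![a] ?_ ?_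
  · intro x
    have h2 := h x
    simpa using h2
  · simp [A3 (hPA := hPA)]
  · intro x hx
    simp at hx ⊢
    rw [A4 (addM a (oneM M)) x, hx, A4 a x]

lemma add_commM : ∀ a x : M, addM a x = addM x a := by
  intro a
  have h := indM (M := M) (k := 1)
    (Term.bdEqual (plusT (Term.var (Sum.inl 0)) (Term.var (Sum.inr 0)))
      (plusT (Term.var (Sum.inr 0)) (Term.var (Sum.inl 0)))) ![a] ?_ ?_
  · intro x
    have h2 := h x
    simpa using h2
  · simp [A3 (hPA := hPA), zero_addM (hPA := hPA)]
  · intro x hx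
    simp at hx ⊢
    rw [A4 a x, hx, succ_addM (hPA := hPA) x a]

lemma add_assocM : ∀ a b x : M, addM (addM a b) x = addM a (addM b x) := by
  intro a b
  have h := indM (M := M) (k := 2)
    (Term.bdEqual (plusT (plusT (Term.var (Sum.inl 0)) (Term.var (Sum.inl 1))) (Term.var (Sum.inr 0)))
      (plusT (Term.var (Sum.inl 0)) (plusT (Term.var (Sum.inl 1)) (Term.var (Sum.inr 0))))) ![a, b] ?_ ?_
  · intro x
    have h2 := h x
    simpa using h2
  · simp [A3 (hPA := hPA)]
  · intro x hx
    simp at hx ⊢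
    rw [A4 (addM a b) x, hx, A4 b x, A4 a (addM b x)]

lemma add_right_cancelM : ∀ a b x : M, addM a x = addM b x → a = b := by
  intro a b
  have h := indM (M := M) (k := 2)
    ((Term.bdEqual (plusT (Term.var (Sum.inl 0)) (Term.var (Sum.inr 0)))
        (plusT (Term.var (Sum.inl 1)) (Term.var (Sum.inr 0)))) ⟹
      Term.bdEqual (Term.var (Sum.inl 0)) (Term.var (Sum.inl 1))) ![a, b] ?_ ?_
  · intro x
    have h2 := h x
    simpa using h2
  · simp
    intro hab
    rw [← A3 (hPA := hPA) a, ← A3 (hPA := hPA) b]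
    exact hab
  · intro x hx
    simp at hx ⊢
    intro hab
    apply hx
    apply A2 (hPA := hPA)
    rw [← A4 a x, ← A4 b x]
    exact hab

lemma add_left_cancelM : ∀ a b x : M, addM x a = addM x b → a = b := by
  intro a b x hx
  apply add_right_cancelM (hPA := hPA) a b x
  rw [add_commM (hPA := hPA) a x, add_commM (hPA := hPA) b x]
  exact hx

lemma predM : ∀ x : M, x = zeroM M ∨ ∃ w, x = addM w (oneM M) := by
  have h := indM (M := M) (k := 0)
    ((Term.bdEqual (Term.var (Sum.inr 0)) zeroT) ⊔
      (Term.bdEqual (Term.var (Sum.inr 0)) (plusT (Term.var (Sum.inr 1)) oneT)).ex) default ?_ ?_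
  · intro x
    have h2 := h x
    simpa [Fin.snoc] using h2
  · simp
  · intro x hx
    simp [Fin.snoc] at hx ⊢
    right
    exact ⟨x, rfl⟩

lemma le_totalM : ∀ a x : M, (∃ z, addM a z = x) ∨ (∃ z, addM x z = a) := by
  intro a
  have h := indM (M := M) (k := 1)
    ((Term.bdEqual (plusT (Term.var (Sum.inl 0)) (Term.var (Sum.inr 1))) (Term.var (Sum.inr 0))).ex ⊔
      (Term.bdEqual (plusT (Term.var (Sum.inr 0)) (Term.var (Sum.inr 1))) (Term.var (Sum.inl 0))).ex) ![a] ?_ ?_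
  · intro x
    have h2 := h x
    simpa [Fin.snoc] using h2
  · simp [Fin.snoc]
    right
    exact ⟨a, zero_addM (hPA := hPA) a⟩
  · intro x hx
    simp [Fin.snoc] at hx ⊢
    rcases hx with ⟨z, hz⟩ | ⟨z, hz⟩
    · left
      exact ⟨addM z (oneM M), by rw [A4 a z, hz]⟩
    · rcases predM (hPA := hPA) z with h0 | ⟨w, hw⟩
      · left
        refine ⟨oneM M, ?_⟩
        rw [h0, A3 (hPA := hPA)] at hz
        rw [hz]
      · right
        refine ⟨w, ?_⟩
        rw [succ_addM (hPA := hPA) x w, ← A4 x w, ← hw, hz]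
end Work5

section Work6
variable {M : Type} [LA.Structure M]

@[simp] lemma std_zero : std M 0 = zeroM M := by simp [std, numeral]
@[simp] lemma std_one : std M 1 = oneM M := by simp [std, numeral]

/-- iterated addition: y ⊕ ⋯ ⊕ y, k times -/
def iterM (y : M) : ℕ → M
  | 0 => zeroM M
  | k + 1 => addM (iterM y k) y

variable [hPA : PA.Model M]

lemma std_succ : ∀ n : ℕ, std M (n + 1) = addM (std M n) (oneM M) := by
  intro n
  match n with
  | 0 => simp [zero_addM (hPA := hPA) (oneM M)]
  | m + 1 => simp [std, numeral]

lemma realize_numeral {α} (v : α → M) : ∀ n, (numeral n).realize v = std M n := by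
  intro n
  induction n with
  | zero => simp [numeral]
  | succ m ih =>
    match m with
    | 0 => simp [numeral]
    | k + 1 =>
      rw [std_succ (hPA := hPA) (k+1), ← ih]
      simp [numeral]

lemma std_add : ∀ a b : ℕ, std M (a + b) = addM (std M a) (std M b) := by
  intro a b
  induction b with
  | zero => simp [A3 (hPA := hPA)]
  | succ m ih =>
    rw [show a + (m+1) = (a+m)+1 from rfl, std_succ (hPA := hPA), ih, std_succ (hPA := hPA),
      A4 (hPA := hPA)]

lemma mul_stdM : ∀ (y : M) (k : ℕ), mulM y (std M k) = iterM y k := by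
  intro y k
  induction k with
  | zero => simpa [iterM] using A5 (hPA := hPA) y
  | succ m ih =>
    rw [std_succ (hPA := hPA), A6 (hPA := hPA), ih]; rfl

lemma iter_addM : ∀ (a b : M) (k : ℕ), iterM (addM a b) k = addM (iterM a k) (iterM b k) := by
  intro a b k
  induction k with
  | zero => simp [iterM, A3 (hPA := hPA)]
  | succ m ih =>
    show addM (iterM (addM a b) m) (addM a b) = addM (addM (iterM a m) a) (addM (iterM b m) b)
    rw [ih]
    rw [add_assocM (hPA := hPA) (iterM a m) (iterM b m) (addM a b),
      add_assocM (hPA := hPA) (iterM a m) a (addM (iterM b m) b)]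
    congr 1
    rw [← add_assocM (hPA := hPA) (iterM b m) a b, ← add_assocM (hPA := hPA) a (iterM b m) b,
      add_commM (hPA := hPA) (iterM b m) a]

lemma iter_oneM : ∀ k : ℕ, iterM (oneM M) k = std M k := by
  intro k
  induction k with
  | zero => simp [iterM]
  | succ m ih => show addM (iterM (oneM M) m) (oneM M) = _; rw [ih, ← std_succ (hPA := hPA)]

lemma add_std_ne_zeroM : ∀ (a : M) (d : ℕ), 0 < d → addM a (std M d) ≠ zeroM M := by
  intro a d hd h
  obtain ⟨e, rfl⟩ : ∃ e, d = e + 1 := ⟨d - 1, by omega⟩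
  rw [std_succ (hPA := hPA), A4 (hPA := hPA)] at h
  exact A1 (hPA := hPA) _ h

lemma le_stdM : ∀ (m : ℕ) (x : M), leM x (std M m) → ∃ j ≤ m, x = std M j := by
  intro m
  induction m with
  | zero =>
    intro x hx
    rw [ALe (hPA := hPA)] at hx
    obtain ⟨z, hz⟩ := hx
    rcases predM (hPA := hPA) x with h0 | ⟨w, hw⟩
    · exact ⟨0, le_refl 0, by simpa using h0⟩
    · exfalso
      rw [hw, succ_addM (hPA := hPA) w z] at hz
      exact A1 (hPA := hPA) _ (by simpa using hz)
  | succ m ih =>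
    intro x hx
    rw [ALe (hPA := hPA)] at hx
    obtain ⟨z, hz⟩ := hx
    rcases predM (hPA := hPA) z with h0 | ⟨w, hw⟩
    · refine ⟨m + 1, le_refl _, ?_⟩
      rw [h0, A3 (hPA := hPA)] at hz
      exact hz
    · have : addM (addM x w) (oneM M) = addM (std M m) (oneM M) := by
        rw [← A4 (hPA := hPA) x w, ← hw, hz, std_succ (hPA := hPA)]
      have h2 : addM x w = std M m := A2 (hPA := hPA) _ _ this
      obtain ⟨j, hj, hxj⟩ := ih x (by rw [ALe (hPA := hPA)]; exact ⟨w, h2⟩)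
      exact ⟨j, by omega, hxj⟩
end Work6

section Work7
variable {M : Type} [LA.Structure M] [hPA : PA.Model M]

lemma iter_zeroM : ∀ k : ℕ, iterM (zeroM M) k = zeroM M := by
  intro k
  induction k with
  | zero => rfl
  | succ m ih => show addM (iterM (zeroM M) m) (zeroM M) = _; rw [ih, A3 (hPA := hPA)]

lemma le_std_of_le {j m : ℕ} (h : j ≤ m) : leM (std M j) (std M m) := by
  rw [ALe (hPA := hPA)]
  exact ⟨std M (m - j), by rw [← std_add (hPA := hPA), Nat.add_sub_cancel' h]⟩

lemma euclidM {p : ℕ} (hp : 0 < p) :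
    ∀ x : M, ∃ (q : M) (j : ℕ), j < p ∧ x = addM (mulM q (std M p)) (std M j) := by
  have key : ∀ x : M, ∃ (q b : M), x = addM (mulM q (std M p)) b ∧ leM b (std M (p - 1)) := by
    have h := indM (M := M) (k := 0)
      (((Term.bdEqual (Term.var (Sum.inr 0))
          (plusT (timesT (Term.var (Sum.inr 1)) (numeral p)) (Term.var (Sum.inr 2)))) ⊓
        (BoundedFormula.rel ArithRel.le ![Term.var (Sum.inr 2), numeral (p - 1)])).ex.ex)
      default ?_ ?_
    · intro x
      have h2 := h x
      simpa [Fin.snoc, realize_numeral (hPA := hPA)] using h2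
    · simp [Fin.snoc, realize_numeral (hPA := hPA)]
      refine ⟨zeroM M, zeroM M, ?_, ?_⟩
      · rw [mul_stdM (hPA := hPA), iter_zeroM (hPA := hPA), A3 (hPA := hPA)]
      · rw [← std_zero (M := M)]; exact le_std_of_le (hPA := hPA) (Nat.zero_le _)
    · intro x hx
      simp [Fin.snoc, realize_numeral (hPA := hPA)] at hx ⊢
      obtain ⟨a, b, hab, hb⟩ := hx
      obtain ⟨j, hj, rfl⟩ := le_stdM (hPA := hPA) (p - 1) b hb
      by_cases hcase : j + 1 ≤ p - 1
      · refine ⟨a, std M (j + 1), ?_, le_std_of_le (hPA := hPA) hcase⟩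
        rw [hab, ← A4 (hPA := hPA), ← std_succ (hPA := hPA)]
      · have hjp : j = p - 1 := by omega
        refine ⟨addM a (oneM M), zeroM M, ?_, by
          rw [← std_zero (M := M)]; exact le_std_of_le (hPA := hPA) (Nat.zero_le _)⟩
        have : mulM (addM a (oneM M)) (std M p) = addM (mulM a (std M p)) (std M p) := by
          rw [mul_stdM (hPA := hPA), mul_stdM (hPA := hPA), iter_addM (hPA := hPA),
            iter_oneM (hPA := hPA)]
        rw [this, A3 (hPA := hPA), hab, hjp, ← A4 (hPA := hPA), ← std_succ (hPA := hPA),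
          show p - 1 + 1 = p by omega]
  intro x
  obtain ⟨q, b, hx, hb⟩ := key x
  obtain ⟨j, hj, rfl⟩ := le_stdM (hPA := hPA) (p - 1) b hb
  exact ⟨q, j, by omega, hx⟩

lemma remainder_uniqueM {p : ℕ} (q : M) {j : ℕ} (hj : j < p) (hj0 : 0 < j) (y : M) :
    mulM y (std M p) ≠ addM (mulM q (std M p)) (std M j) := by
  rw [mul_stdM (hPA := hPA), mul_stdM (hPA := hPA)]
  intro heq
  rcases le_totalM (hPA := hPA) q y with ⟨z, hz⟩ | ⟨z, hz⟩
  · rw [← hz, iter_addM (hPA := hPA)] at heq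
    have hzp : iterM z p = std M j := add_left_cancelM (hPA := hPA) _ _ _ heq
    rcases predM (hPA := hPA) z with h0 | ⟨w, hw⟩
    · rw [h0, iter_zeroM (hPA := hPA)] at hzp
      exact add_std_ne_zeroM (hPA := hPA) (zeroM M) j hj0
        (by rw [zero_addM (hPA := hPA)]; exact hzp.symm)
    · rw [hw, iter_addM (hPA := hPA), iter_oneM (hPA := hPA)] at hzp
      have hsplit : std M p = addM (std M j) (std M (p - j)) := by
        rw [← std_add (hPA := hPA), Nat.add_sub_cancel' (le_of_lt hj)]
      rw [hsplit, ← add_assocM (hPA := hPA),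
        add_commM (hPA := hPA) (addM (iterM w p) (std M j)) (std M (p - j))] at hzp
      rw [← add_assocM (hPA := hPA)] at hzp
      have : addM (std M (p - j)) (iterM w p) = zeroM M := by
        apply add_right_cancelM (hPA := hPA) _ _ (std M j)
        rw [hzp, zero_addM (hPA := hPA)]
      rw [add_commM (hPA := hPA)] at this
      exact add_std_ne_zeroM (hPA := hPA) (iterM w p) (p - j) (by omega) this
  · rw [← hz, iter_addM (hPA := hPA), add_assocM (hPA := hPA)] at heq
    have h0 : addM (iterM z p) (std M j) = zeroM M := by
      apply add_left_cancelM (hPA := hPA) _ _ (iterM y p)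
      rw [← heq, A3 (hPA := hPA)]
    exact add_std_ne_zeroM (hPA := hPA) (iterM z p) j hj0 h0
end Work7

section Comp

/-- primality test by trial division -/
def primeAux (n : ℕ) : ℕ → Bool
  | 0 => true
  | d + 1 => primeAux n d && decide (d < 2 ∨ ¬ n % d = 0)

def isPr (n : ℕ) : Bool := decide (2 ≤ n) && primeAux n n

lemma primeAux_iff (n k : ℕ) : primeAux n k = true ↔ ∀ d < k, 2 ≤ d → n % d ≠ 0 := by
  induction k with
  | zero => simp [primeAux]
  | succ m ih =>
    simp only [primeAux, Bool.and_eq_true, decide_eq_true_eq, ih]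
    constructor
    · rintro ⟨h1, h2⟩ d hd h2d
      rcases Nat.lt_succ_iff_lt_or_eq.1 hd with h | rfl
      · exact h1 d h h2d
      · rcases h2 with h | h
        · omega
        · exact h
    · intro h
      refine ⟨fun d hd h2d => h d (by omega) h2d, ?_⟩
      by_cases hm : 2 ≤ m
      · right; exact h m (by omega) hm
      · left; omega

lemma isPr_iff (n : ℕ) : isPr n = true ↔ Nat.Prime n := by
  rw [Nat.prime_def_lt]
  simp only [isPr, Bool.and_eq_true, decide_eq_true_eq, primeAux_iff]
  constructor
  · rintro ⟨h2, h⟩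
    refine ⟨h2, fun m hm hdvd => ?_⟩
    by_contra hm1
    have hm0 : m ≠ 0 := by
      rintro rfl
      rw [Nat.zero_dvd] at hdvd
      omega
    have h2m : 2 ≤ m := by omega
    exact h m hm h2m (Nat.dvd_iff_mod_eq_zero.1 hdvd)
  · rintro ⟨h2, h⟩
    refine ⟨h2, fun d hd h2d hmod => ?_⟩
    have hdvd : d ∣ n := Nat.dvd_iff_mod_eq_zero.2 hmod
    have := h d hd hdvd
    omega

def cnt (n : ℕ) : ℕ := Nat.rec 0 (fun d ih => ih + cond (isPr d) 1 0) n

lemma cnt_eq (n : ℕ) : cnt n = Nat.count Nat.Prime n := by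
  induction n with
  | zero => simp [cnt]
  | succ m ih =>
    show cnt m + cond (isPr m) 1 0 = _
    rw [Nat.count_succ, ih]
    by_cases h : Nat.Prime m
    · have : isPr m = true := (isPr_iff m).2 h
      simp [this, h]
    · have : isPr m = false := by
        rcases Bool.eq_false_or_eq_true (isPr m) with h' | h'
        · exact absurd ((isPr_iff m).1 h') h
        · exact h'
      simp [this, h]

lemma nth_prime_iff (n m : ℕ) :
    m = Nat.nth Nat.Prime n ↔ (isPr m = true ∧ cnt m = n) := by
  rw [isPr_iff, cnt_eq]
  constructor
  · rintro rfl
    exact ⟨Nat.nth_mem_of_infinite Nat.infinite_setOf_prime n,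
      Nat.count_nth_of_infinite Nat.infinite_setOf_prime n⟩
  · rintro ⟨hp, hc⟩
    rw [← hc, Nat.nth_count hp]

lemma isPrC : Computable isPr := by
  have h1 : Computable (fun a : ℕ × ℕ =>
      Nat.rec (motive := fun _ => Bool) true
        (fun d ih => ih && decide (d < 2 ∨ ¬ a.1 % d = 0)) a.2) := by
    refine (Computable.nat_rec (f := fun a : ℕ × ℕ => a.2) (g := fun _ => true)
      (h := fun a p => p.2 && decide (p.1 < 2 ∨ ¬ a.1 % p.1 = 0))
      Computable.snd (Computable.const true) ?_).of_eq (fun a => rfl)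
    have hp : PrimrecPred (fun x : (ℕ × ℕ) × (ℕ × Bool) =>
        x.2.2 = true ∧ (x.2.1 < 2 ∨ ¬ x.1.1 % x.2.1 = 0)) := by
      refine PrimrecPred.and ?_ (PrimrecPred.or ?_ (PrimrecPred.not ?_))
      · exact Primrec.eq.comp (Primrec.snd.comp Primrec.snd) (Primrec.const true)
      · exact Primrec.nat_lt.comp (Primrec.fst.comp Primrec.snd) (Primrec.const 2)
      · exact Primrec.eq.comp
          (Primrec.nat_mod.comp (Primrec.fst.comp Primrec.fst) (Primrec.fst.comp Primrec.snd))
          (Primrec.const 0)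
    have hcomp : Computable (fun x : (ℕ × ℕ) × (ℕ × Bool) =>
        x.2.2 && decide (x.2.1 < 2 ∨ ¬ x.1.1 % x.2.1 = 0)) := by
      apply (Primrec.to_comp hp.decide).of_eq
      intro x
      rcases x with ⟨⟨a, b⟩, ⟨d, ih⟩⟩
      cases ih <;> by_cases h1 : d < 2 <;> by_cases h2 : a % d = 0 <;> simp [h1, h2]
    exact hcomp
  have key : ∀ a k : ℕ, Nat.rec (motive := fun _ => Bool) true
      (fun d ih => ih && decide (d < 2 ∨ ¬ a % d = 0)) k = primeAux a k := by
    intro a k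
    induction k with
    | zero => rfl
    | succ m ih => show (_ && _) = (_ && _); rw [ih]
  have h2 : Computable (fun n : ℕ => primeAux n n) := by
    apply (h1.comp (Computable.id.pair Computable.id)).of_eq
    intro n
    exact key n n
  have h3 : Computable (fun n : ℕ => decide (2 ≤ n)) :=
    Primrec.to_comp (PrimrecPred.decide <| Primrec.nat_le.comp (Primrec.const 2) Primrec.id)
  exact (Primrec.and.to_comp.comp h3 h2 : Computable fun n => decide (2 ≤ n) && primeAux n n)

end Comp

lemma cntC : Computable cnt := by
  refine (Computable.nat_rec (f := fun a : ℕ => a) (g := fun _ => 0)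
    (h := fun _ p => p.2 + cond (isPr p.1) 1 0)
    Computable.id (Computable.const 0) ?_).of_eq (fun a => rfl)
  exact Primrec.nat_add.to_comp.comp
    (Computable.snd.comp Computable.snd)
    (Computable.cond (isPrC.comp (Computable.fst.comp Computable.snd))
      (Computable.const 1) (Computable.const 0))

def sval (f : ℕ → ℕ → ℕ) (n0 n1 : ℕ) : ℕ → ℕ := fun t => Nat.rec n0 (fun _ ih => f ih n1) t

def iterf (f : ℕ → ℕ → ℕ) (n0 : ℕ) : ℕ → ℕ → ℕ := fun y p => Nat.rec n0 (fun _ ih => f ih y) p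

lemma svalC {f : ℕ → ℕ → ℕ} {n0 n1 : ℕ} (hf : Computable₂ f) : Computable (sval f n0 n1) := by
  refine (Computable.nat_rec (f := fun a : ℕ => a) (g := fun _ => n0)
    (h := fun _ p => f p.2 n1)
    Computable.id (Computable.const n0) ?_).of_eq (fun a => rfl)
  exact hf.comp (Computable.snd.comp Computable.snd) (Computable.const n1)

lemma iterfC {f : ℕ → ℕ → ℕ} {n0 : ℕ} (hf : Computable₂ f) : Computable₂ (iterf f n0) := by
  refine (Computable.nat_rec (f := fun a : ℕ × ℕ => a.2) (g := fun _ => n0)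
    (h := fun a p => f p.2 a.1)
    Computable.snd (Computable.const n0) ?_).of_eq (fun a => rfl)
  exact hf.comp (Computable.snd.comp Computable.snd) (Computable.fst.comp Computable.fst)

lemma re_of_exists_bool {p : ℕ → Prop} {b : ℕ → ℕ → Bool} (hb : Computable₂ b)
    (h : ∀ n, p n ↔ ∃ w, b n w = true) : REPred p := by
  have hp : Partrec fun n => Nat.rfind (fun w => (Part.some (b n w) : Part Bool) : ℕ →. Bool) :=
    Partrec.rfind hb.partrec₂
  apply hp.dom_re.of_eq
  intro n
  rw [Nat.rfind_dom (p := fun w => Part.some (b n w)), h n]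
  constructor
  · rintro ⟨w, hw, _⟩
    exact ⟨w, by simpa using hw⟩
  · rintro ⟨w, hw⟩
    exact ⟨w, by simpa using hw, fun _ => trivial⟩

/-- If addition of a non-standard model of PA with domain ℕ is computable, then
divisibility by (numerals of) primes is decidable uniformly in `n`. -/
theorem stmt14 (f g : ℕ → ℕ → ℕ) (r : ℕ → ℕ → Prop) (n0 n1 : ℕ)
    (hPA : @Theory.Model LA ℕ (mkStructure f g r n0 n1) PA)
    (hns : IsEmpty (@FirstOrder.Language.Equiv LA ℕ ℕ (mkStructure f g r n0 n1) stdNat))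
    (hf : Computable₂ f) (c : ℕ) :
    ComputablePred (fun n : ℕ => ∃ y : ℕ,
      c = @mulM ℕ (mkStructure f g r n0 n1) y
        (@std ℕ (mkStructure f g r n0 n1) (Nat.nth Nat.Prime n))) := by
  clear hns
  letI inst : LA.Structure ℕ := mkStructure f g r n0 n1
  haveI hM : PA.Model ℕ := hPA
  have haddM : ∀ a b : ℕ, addM a b = f a b := by
    intro a b
    show f (![a, b] 0) (![a, b] 1) = f a b
    simp
  have hsval : ∀ t, sval f n0 n1 t = std ℕ t := by
    intro t
    induction t with
    | zero => rfl
    | succ t ih =>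
      show f (sval f n0 n1 t) n1 = std ℕ (t + 1)
      rw [ih, std_succ (hPA := hM) t, haddM]
      rfl
  have hiter : ∀ y k, iterf f n0 y k = iterM y k := by
    intro y k
    induction k with
    | zero => rfl
    | succ k ih =>
      show f (iterf f n0 y k) y = addM (iterM y k) y
      rw [ih, haddM]
  have hu1 : Computable fun x : ℕ × ℕ => x.2.unpair.1 :=
    Primrec.to_comp (Primrec.fst.comp (Primrec.unpair.comp Primrec.snd))
  have hu2 : Computable fun x : ℕ × ℕ => x.2.unpair.2 :=
    Primrec.to_comp (Primrec.snd.comp (Primrec.unpair.comp Primrec.snd))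
  have hu11 : Computable fun x : ℕ × ℕ => x.2.unpair.1.unpair.1 :=
    Primrec.to_comp (Primrec.fst.comp (Primrec.unpair.comp
      (Primrec.fst.comp (Primrec.unpair.comp Primrec.snd))))
  have hu12 : Computable fun x : ℕ × ℕ => x.2.unpair.1.unpair.2 :=
    Primrec.to_comp (Primrec.snd.comp (Primrec.unpair.comp
      (Primrec.fst.comp (Primrec.unpair.comp Primrec.snd))))
  have hprime : Nat.Prime (Nat.nth Nat.Prime 0) ∨ True := Or.inr trivial
  apply ComputablePred.computable_iff_re_compl_re'.2
  constructor
  · -- the predicate itself is r.e.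
    apply re_of_exists_bool (b := fun n w => isPr w.unpair.2 && decide (cnt w.unpair.2 = n)
        && decide (c = iterf f n0 w.unpair.1 w.unpair.2))
    · exact Primrec.and.to_comp.comp
        (Primrec.and.to_comp.comp (isPrC.comp hu2)
          (Primrec.eq.decide.to_comp.comp (cntC.comp hu2) Computable.fst))
        (Primrec.eq.decide.to_comp.comp (Computable.const c) ((iterfC hf).comp hu1 hu2))
    · intro n
      constructor
      · rintro ⟨y, hy⟩
        refine ⟨Nat.pair y (Nat.nth Nat.Prime n), ?_⟩
        simp only [Nat.unpair_pair, Bool.and_eq_true, decide_eq_true_eq]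
        refine ⟨⟨(isPr_iff _).2 (Nat.nth_mem_of_infinite Nat.infinite_setOf_prime n), ?_⟩, ?_⟩
        · rw [cnt_eq]
          exact Nat.count_nth_of_infinite Nat.infinite_setOf_prime n
        · rw [hiter, ← mul_stdM (hPA := hM)]
          exact hy
      · rintro ⟨w, hw⟩
        simp only [Bool.and_eq_true, decide_eq_true_eq] at hw
        obtain ⟨⟨hpr, hcnt⟩, hc⟩ := hw
        have hm : w.unpair.2 = Nat.nth Nat.Prime n := (nth_prime_iff n _).2 ⟨hpr, hcnt⟩
        refine ⟨w.unpair.1, ?_⟩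
        rw [← hm, mul_stdM (hPA := hM), ← hiter]
        exact hc
  · -- the complement is r.e.
    apply re_of_exists_bool (b := fun n w => isPr w.unpair.2 && decide (cnt w.unpair.2 = n)
        && decide (0 < w.unpair.1.unpair.2 ∧ w.unpair.1.unpair.2 < w.unpair.2)
        && decide (c = f (iterf f n0 w.unpair.1.unpair.1 w.unpair.2)
            (sval f n0 n1 w.unpair.1.unpair.2)))
    · refine Primrec.and.to_comp.comp (Primrec.and.to_comp.comp
        (Primrec.and.to_comp.comp (isPrC.comp hu2)
          (Primrec.eq.decide.to_comp.comp (cntC.comp hu2) Computable.fst)) ?_) ?_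
      · have h1 : Computable fun x : ℕ × ℕ => decide (0 < x.2.unpair.1.unpair.2) :=
          Primrec.to_comp (PrimrecPred.decide <| Primrec.nat_lt.comp (Primrec.const 0)
            (Primrec.snd.comp (Primrec.unpair.comp
              (Primrec.fst.comp (Primrec.unpair.comp Primrec.snd)))))
        have h2 : Computable fun x : ℕ × ℕ =>
            decide (x.2.unpair.1.unpair.2 < x.2.unpair.2) :=
          Primrec.to_comp (PrimrecPred.decide <| Primrec.nat_lt.comp
            (Primrec.snd.comp (Primrec.unpair.comp
              (Primrec.fst.comp (Primrec.unpair.comp Primrec.snd))))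
            (Primrec.snd.comp (Primrec.unpair.comp Primrec.snd)))
        exact (Primrec.and.to_comp.comp h1 h2).of_eq (fun x => by
          by_cases hA : 0 < x.2.unpair.1.unpair.2 <;>
            by_cases hB : x.2.unpair.1.unpair.2 < x.2.unpair.2 <;> simp [hA, hB])
      · exact Primrec.eq.decide.to_comp.comp (Computable.const c)
          (hf.comp ((iterfC hf).comp hu11 hu2) ((svalC hf).comp hu12))
    · intro n
      set p := Nat.nth Nat.Prime n with hpdef
      have hppr : Nat.Prime p := Nat.nth_mem_of_infinite Nat.infinite_setOf_prime n
      constructor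
      · intro hnP
        obtain ⟨q, j, hj, hcq⟩ := euclidM (hPA := hM) (p := p) hppr.pos c
        have hj0 : 0 < j := by
          rcases Nat.eq_zero_or_pos j with rfl | h
          · exfalso
            apply hnP
            refine ⟨q, ?_⟩
            rw [hcq, std_zero, A3 (hPA := hM)]
          · exact h
        refine ⟨Nat.pair (Nat.pair q j) p, ?_⟩
        simp only [Nat.unpair_pair, Bool.and_eq_true, decide_eq_true_eq]
        refine ⟨⟨⟨(isPr_iff _).2 hppr, ?_⟩, hj0, hj⟩, ?_⟩
        · rw [cnt_eq]
          exact Nat.count_nth_of_infinite Nat.infinite_setOf_prime n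
        · rw [hiter, hsval, ← haddM, ← mul_stdM (hPA := hM)]
          exact hcq
      · rintro ⟨w, hw⟩ ⟨y, hy⟩
        simp only [Bool.and_eq_true, decide_eq_true_eq] at hw
        obtain ⟨⟨⟨hpr, hcnt⟩, hj0, hjm⟩, hc⟩ := hw
        have hm : w.unpair.2 = p := (nth_prime_iff n _).2 ⟨hpr, hcnt⟩
        rw [hm] at hc hjm
        rw [hiter, hsval, ← haddM, ← mul_stdM (hPA := hM)] at hc
        rw [hc] at hy
        exact remainder_uniqueM (hPA := hM) _ hjm hj0 y hy.symm
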